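/- For every nonnegative integer j, every real k and every real x with |x| < 1, the series Σ_{i=0}^{∞} c(i,j,k)·x^i/i! converges with sum (1+x)^{-k} · (ln(1+x))^j / j! (here (1+x)^{-k} is the real power of the positive real number 1+x). -/

import Mathlib

open Finset

/-- Signed Stirling numbers of the first kind, defined as the coefficients of the
falling factorial polynomial `x*(x-1)*...*(x-i+1) = sum_{r=0}^{i} s(i,r)*x^r`. -/
noncomputable def s (i r : ℕ) : ℝ := (descPochhammer ℝ i).coeff r

/-- Moment generating Stirling numbers of the first kind (MSN1):
`c(i,j,k) = sum_{r=j}^{i} binom(r,j)*(-k)^(r-j)*s(i,r)` (and `0` if `j > i`). -/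
noncomputable def c (i j : ℕ) (k : ℝ) : ℝ :=
  ∑ r ∈ Finset.Icc j i, (r.choose j : ℝ) * (-k) ^ (r - j) * s i r

open Polynomial in
noncomputable def msnQ (i : ℕ) (k : ℝ) : Polynomial ℝ := (descPochhammer ℝ i).comp (X - C k)

open Polynomial in
lemma c_eq_coeff (i j : ℕ) (k : ℝ) : c i j k = (msnQ i k).coeff j := by
  have hsub : Finset.Icc j i ⊆ Finset.range (i + 1) := by
    intro r hr
    simp only [Finset.mem_Icc] at hr
    exact Finset.mem_range.2 (by omega)
  have hvan : ∀ r ∈ Finset.range (i + 1), r ∉ Finset.Icc j i →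
      (r.choose j : ℝ) * (-k) ^ (r - j) * s i r = 0 := by
    intro r hr hr'
    simp only [Finset.mem_range] at hr
    simp only [Finset.mem_Icc, not_and, not_le] at hr'
    have hrj : r < j := by
      rcases Nat.lt_or_ge r j with h | h
      · exact h
      · exact absurd (hr' h) (by omega)
    rw [Nat.choose_eq_zero_of_lt hrj]
    simp
  rw [c, Finset.sum_subset hsub hvan, msnQ, (descPochhammer ℝ i).as_sum_range' (i + 1)
    (by rw [descPochhammer_natDegree]; omega)]
  have hcomp : ((∑ r ∈ Finset.range (i + 1),
      (monomial r ((descPochhammer ℝ i).coeff r))).comp (X - C k)) =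
      ∑ r ∈ Finset.range (i + 1), C ((descPochhammer ℝ i).coeff r) * (X - C k) ^ r := by
    rw [Polynomial.comp, Polynomial.eval₂_finset_sum]
    exact Finset.sum_congr rfl fun r _ => by rw [Polynomial.eval₂_monomial]
  rw [hcomp, Polynomial.finset_sum_coeff]
  refine Finset.sum_congr rfl fun r _ => ?_
  rw [coeff_C_mul, show (X - C k : ℝ[X]) = X + C (-k) by rw [map_neg]; ring,
    coeff_X_add_C_pow]
  rw [s]
  ring

open Polynomial in
lemma msnQ_zero (k : ℝ) : msnQ 0 k = 1 := by
  simp [msnQ, descPochhammer]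

open Polynomial in
lemma msnQ_succ (i : ℕ) (k : ℝ) : msnQ (i + 1) k = msnQ i k * (X - C (k + i)) := by
  rw [msnQ, descPochhammer_succ_right, Polynomial.mul_comp, msnQ]
  congr 1
  rw [Polynomial.sub_comp, Polynomial.X_comp, Polynomial.natCast_comp]
  rw [← Polynomial.C_eq_natCast, map_add]
  ring

lemma c_zero_left (j : ℕ) (k : ℝ) : c 0 j k = if j = 0 then 1 else 0 := by
  rw [c_eq_coeff, msnQ_zero, Polynomial.coeff_one]

lemma c_succ_succ (i j : ℕ) (k : ℝ) :
    c (i + 1) (j + 1) k = c i j k - c i (j + 1) k * (k + i) := by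
  rw [c_eq_coeff, c_eq_coeff, c_eq_coeff, msnQ_succ, Polynomial.coeff_mul_X_sub_C]

lemma c_succ_zero (i : ℕ) (k : ℝ) : c (i + 1) 0 k = -(c i 0 k * (k + i)) := by
  rw [c_eq_coeff, c_eq_coeff, msnQ_succ, Polynomial.mul_coeff_zero]
  simp only [Polynomial.coeff_sub, Polynomial.coeff_X_zero, Polynomial.coeff_C, ite_true,
    eq_self_iff_true]
  ring

noncomputable def msnB (k : ℝ) (i : ℕ) : ℝ := ∏ l ∈ Finset.range i, (1 + |k| + l)

lemma msnB_nonneg (k : ℝ) (i : ℕ) : 0 ≤ msnB k i :=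
  Finset.prod_nonneg fun l _ => by positivity

lemma msnB_succ (k : ℝ) (i : ℕ) : msnB k (i + 1) = msnB k i * (1 + |k| + i) :=
  Finset.prod_range_succ _ _

lemma c_bound (k : ℝ) : ∀ i j, |c i j k| ≤ msnB k i := by
  intro i
  induction i with
  | zero =>
    intro j
    rw [c_zero_left, msnB]
    split <;> simp
  | succ i ih =>
    intro j
    have hki : |k + (i : ℝ)| ≤ |k| + i := by
      calc |k + (i : ℝ)| ≤ |k| + |(i : ℝ)| := abs_add_le _ _
        _ = |k| + i := by rw [Nat.abs_cast]
    rw [msnB_succ]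
    match j with
    | 0 =>
      rw [c_succ_zero, abs_neg, abs_mul]
      calc |c i 0 k| * |k + (i : ℝ)| ≤ msnB k i * (1 + |k| + i) := by
            apply mul_le_mul (ih 0) (by linarith) (abs_nonneg _) (msnB_nonneg k i)
        _ = msnB k i * (1 + |k| + i) := rfl
    | j + 1 =>
      rw [c_succ_succ]
      calc |c i j k - c i (j + 1) k * (k + i)|
          ≤ |c i j k| + |c i (j + 1) k| * |k + (i : ℝ)| := by
            rw [← abs_mul]; exact abs_sub _ _
        _ ≤ msnB k i + msnB k i * (|k| + i) := by
            apply add_le_add (ih j)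
            apply mul_le_mul (ih (j + 1)) hki (abs_nonneg _) (msnB_nonneg k i)
        _ = msnB k i * (1 + |k| + i) := by ring

lemma summable_msnB (k : ℝ) (a : ℕ) {r : ℝ} (h0 : 0 < r) (h1 : r < 1) :
    Summable (fun i : ℕ => msnB k (i + a) * r ^ i / (Nat.factorial i : ℝ)) := by
  set ρ : ℝ := (1 + r) / 2 with hρ
  have hρ1 : ρ < 1 := by rw [hρ]; linarith
  have hρr : r < ρ := by rw [hρ]; linarith
  apply summable_of_ratio_norm_eventually_le hρ1
  have hN : ∀ᶠ i : ℕ in Filter.atTop, r * (1 + |k| + (i + a)) ≤ ρ * (i + 1) := by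
    filter_upwards [Filter.eventually_ge_atTop
      (⌈(r * (1 + |k| + a) + r) / (ρ - r)⌉₊)] with i hi
    have hi' : ((r * (1 + |k| + a) + r) / (ρ - r)) ≤ (i : ℝ) := by
      calc _ ≤ (⌈(r * (1 + |k| + a) + r) / (ρ - r)⌉₊ : ℝ) := Nat.le_ceil _
        _ ≤ (i : ℝ) := Nat.cast_le.2 hi
    rw [div_le_iff₀ (by linarith)] at hi'
    push_cast
    nlinarith
  filter_upwards [hN] with i hi
  have hfac : ((i + 1).factorial : ℝ) = (i + 1) * i.factorial := by
    rw [Nat.factorial_succ]; push_cast; ring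
  have hfpos : (0 : ℝ) < i.factorial := by positivity
  have heq : msnB k (i + 1 + a) * r ^ (i + 1) / ((i + 1).factorial : ℝ)
      = (msnB k (i + a) * r ^ i / (Nat.factorial i : ℝ)) * (r * (1 + |k| + (i + a)) / (i + 1)) := by
    have : i + 1 + a = (i + a) + 1 := by omega
    rw [this, msnB_succ, hfac]
    push_cast
    field_simp
    ring
  have hB : 0 ≤ msnB k (i + a) := msnB_nonneg _ _
  have hB' : 0 ≤ msnB k (i + 1 + a) := msnB_nonneg _ _
  have h1' : 0 ≤ msnB k (i + a) * r ^ i / (Nat.factorial i : ℝ) :=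
    div_nonneg (mul_nonneg hB (by positivity)) (by positivity)
  rw [Real.norm_eq_abs, Real.norm_eq_abs,
    abs_of_nonneg (show 0 ≤ msnB k (i + 1 + a) * r ^ (i + 1) / ((i + 1).factorial : ℝ) from
      div_nonneg (mul_nonneg hB' (by positivity)) (by positivity)),
    abs_of_nonneg h1', heq]
  have hle : r * (1 + |k| + (i + a)) / (i + 1) ≤ ρ := by
    rw [div_le_iff₀ (by positivity)]
    push_cast
    push_cast at hi
    linarith
  calc (msnB k (i + a) * r ^ i / (Nat.factorial i : ℝ)) * (r * (1 + |k| + (i + a)) / (i + 1))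
      ≤ (msnB k (i + a) * r ^ i / (Nat.factorial i : ℝ)) * ρ := by
        apply mul_le_mul_of_nonneg_left hle h1'
    _ = ρ * (msnB k (i + a) * r ^ i / (Nat.factorial i : ℝ)) := by ring

lemma summable_terms (j : ℕ) (k x : ℝ) {r : ℝ} (hx : |x| ≤ r) (h0 : 0 < r) (h1 : r < 1) :
    Summable (fun i : ℕ => c i j k * x ^ i / (Nat.factorial i : ℝ)) := by
  apply Summable.of_norm_bounded (summable_msnB k 0 h0 h1)
  intro i
  rw [Real.norm_eq_abs, abs_div, abs_mul, abs_pow, Nat.abs_cast, Nat.add_zero]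
  gcongr <;>
    first
      | exact msnB_nonneg _ _
      | exact c_bound k _ j
      | exact abs_nonneg x
      | exact hx

lemma summable_terms' (j : ℕ) (k x : ℝ) {r : ℝ} (hx : |x| ≤ r) (h0 : 0 < r) (h1 : r < 1) :
    Summable (fun i : ℕ => c (i + 1) j k * x ^ i / (Nat.factorial i : ℝ)) := by
  apply Summable.of_norm_bounded (summable_msnB k 1 h0 h1)
  intro i
  rw [Real.norm_eq_abs, abs_div, abs_mul, abs_pow, Nat.abs_cast]
  gcongr <;>
    first
      | exact msnB_nonneg _ _
      | exact c_bound k _ j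
      | exact abs_nonneg x
      | exact hx

noncomputable def msnF (j : ℕ) (k x : ℝ) : ℝ := ∑' i : ℕ, c i j k * x ^ i / (Nat.factorial i : ℝ)

noncomputable def msnF' (j : ℕ) (k x : ℝ) : ℝ :=
  ∑' i : ℕ, c (i + 1) j k * x ^ i / (Nat.factorial i : ℝ)

lemma hasDerivAt_msnF (j : ℕ) (k : ℝ) {x : ℝ} (hx : |x| < 1) :
    HasDerivAt (msnF j k) (msnF' j k x) x := by
  set r : ℝ := (1 + |x|) / 2 with hr
  have h0 : 0 < r := by rw [hr]; positivity
  have h1 : r < 1 := by rw [hr]; linarith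
  have hxr : |x| < r := by rw [hr]; linarith
  -- the bound for the derivative terms
  set u : ℕ → ℝ := fun i => msnB k i * ((i : ℝ) * r ^ (i - 1)) / (Nat.factorial i : ℝ) with hu
  have hu_succ : ∀ i : ℕ, u (i + 1) = msnB k (i + 1) * r ^ i / (Nat.factorial i : ℝ) := by
    intro i
    rw [hu]
    have hfac : ((i + 1).factorial : ℝ) = ((i : ℝ) + 1) * (Nat.factorial i : ℝ) := by
      rw [Nat.factorial_succ]; push_cast; ring
    simp only [Nat.add_sub_cancel, Nat.cast_add, Nat.cast_one, hfac]
    have h2 : (0 : ℝ) < (i : ℝ) + 1 := by positivity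
    field_simp
  have hus : Summable u := by
    rw [← summable_nat_add_iff 1]
    refine ((summable_msnB k 1 h0 h1).congr ?_).congr fun i => rfl
    intro i
    rw [hu_succ i]
  -- derivative of each term
  have hterm : ∀ (i : ℕ) (y : ℝ),
      HasDerivAt (fun z : ℝ => c i j k * z ^ i / (Nat.factorial i : ℝ))
        (c i j k * ((i : ℝ) * y ^ (i - 1)) / (Nat.factorial i : ℝ)) y := by
    intro i y
    exact ((hasDerivAt_pow i y).const_mul (c i j k)).div_const _
  have hbound : ∀ (i : ℕ) (y : ℝ), y ∈ Metric.ball (0 : ℝ) r →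
      ‖c i j k * ((i : ℝ) * y ^ (i - 1)) / (Nat.factorial i : ℝ)‖ ≤ u i := by
    intro i y hy
    rw [mem_ball_zero_iff, Real.norm_eq_abs] at hy
    rw [Real.norm_eq_abs, abs_div, abs_mul, abs_mul, abs_pow, Nat.abs_cast, Nat.abs_cast]
    show _ ≤ msnB k i * ((i : ℝ) * r ^ (i - 1)) / (Nat.factorial i : ℝ)
    gcongr <;>
      first
        | exact msnB_nonneg _ _
        | exact c_bound k _ j
        | exact abs_nonneg y
        | exact hy.le
  have := hasDerivAt_tsum_of_isPreconnected hus Metric.isOpen_ball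
    (convex_ball (0 : ℝ) r).isPreconnected
    (fun i y _ => hterm i y) hbound (mem_ball_zero_iff.2 (by simpa using hxr))
    (summable_terms j k x hxr.le h0 h1) (mem_ball_zero_iff.2 (by simpa using hxr))
  have hsum' : Summable (fun i : ℕ => c i j k * ((i : ℝ) * x ^ (i - 1)) / (Nat.factorial i : ℝ)) :=
    Summable.of_norm_bounded hus fun i => hbound i x (mem_ball_zero_iff.2 (by simpa using hxr))
  have hdeq : (∑' i : ℕ, c i j k * ((i : ℝ) * x ^ (i - 1)) / (Nat.factorial i : ℝ))
      = msnF' j k x := by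
    rw [Summable.tsum_eq_zero_add hsum']
    simp only [Nat.cast_zero, zero_mul, mul_zero, zero_div, zero_add]
    rw [msnF']
    congr 1
    funext i
    have hfac : ((i + 1).factorial : ℝ) = ((i : ℝ) + 1) * (Nat.factorial i : ℝ) := by
      rw [Nat.factorial_succ]; push_cast; ring
    simp only [Nat.add_sub_cancel, Nat.cast_add, Nat.cast_one, hfac]
    have h2 : (0 : ℝ) < (i : ℝ) + 1 := by positivity
    field_simp
  rw [← hdeq]
  exact this

lemma hasSum_msnF (j : ℕ) (k : ℝ) {x : ℝ} (hx : |x| < 1) :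
    HasSum (fun i : ℕ => c i j k * x ^ i / (Nat.factorial i : ℝ)) (msnF j k x) :=
  (summable_terms j k x (by linarith [abs_nonneg x] : |x| ≤ (1 + |x|) / 2)
    (by positivity) (by linarith)).hasSum

lemma hasSum_msnF' (j : ℕ) (k : ℝ) {x : ℝ} (hx : |x| < 1) :
    HasSum (fun i : ℕ => c (i + 1) j k * x ^ i / (Nat.factorial i : ℝ)) (msnF' j k x) :=
  (summable_terms' j k x ((by linarith [abs_nonneg x] : |x| ≤ (1 + |x|) / 2))
    (by positivity) (by linarith)).hasSum

/-- `x * msnF' j k x` is the sum of `i * c i j k * x^i / i!`. -/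
lemma hasSum_x_msnF' (j : ℕ) (k : ℝ) {x : ℝ} (hx : |x| < 1) :
    HasSum (fun i : ℕ => (i : ℝ) * c i j k * x ^ i / (Nat.factorial i : ℝ))
      (x * msnF' j k x) := by
  have h1 := (hasSum_msnF' j k hx).mul_left x
  have h2 : (fun i : ℕ => x * (c (i + 1) j k * x ^ i / (Nat.factorial i : ℝ)))
      = fun i : ℕ => ((i : ℝ) + 1) * c (i + 1) j k * x ^ (i + 1) / (Nat.factorial (i + 1) : ℝ) := by
    funext i
    have hfac : ((i + 1).factorial : ℝ) = ((i : ℝ) + 1) * (Nat.factorial i : ℝ) := by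
      rw [Nat.factorial_succ]; push_cast; ring
    rw [hfac, pow_succ]
    have h2 : (0 : ℝ) < (i : ℝ) + 1 := by positivity
    field_simp
  rw [h2] at h1
  have h3 := (hasSum_nat_add_iff (f := fun i : ℕ =>
    (i : ℝ) * c i j k * x ^ i / (Nat.factorial i : ℝ)) 1).mp (by exact_mod_cast h1)
  simpa using h3

lemma msn_ode_zero (k : ℝ) {x : ℝ} (hx : |x| < 1) :
    (1 + x) * msnF' 0 k x = -k * msnF 0 k x := by
  have h1 := (hasSum_msnF' 0 k hx).add (hasSum_x_msnF' 0 k hx)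
  have h2 := (hasSum_msnF 0 k hx).mul_left (-k)
  have heq : (fun i : ℕ => c (i + 1) 0 k * x ^ i / (Nat.factorial i : ℝ)
      + (i : ℝ) * c i 0 k * x ^ i / (Nat.factorial i : ℝ))
      = fun i : ℕ => -k * (c i 0 k * x ^ i / (Nat.factorial i : ℝ)) := by
    funext i
    rw [c_succ_zero]
    field_simp
    ring
  rw [heq] at h1
  have := h1.unique h2
  linarith [this]

lemma msn_ode_succ (j : ℕ) (k : ℝ) {x : ℝ} (hx : |x| < 1) :
    (1 + x) * msnF' (j + 1) k x = msnF j k x - k * msnF (j + 1) k x := by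
  have h1 := (hasSum_msnF' (j + 1) k hx).add (hasSum_x_msnF' (j + 1) k hx)
  have h2 := (hasSum_msnF j k hx).sub ((hasSum_msnF (j + 1) k hx).mul_left k)
  have heq : (fun i : ℕ => c (i + 1) (j + 1) k * x ^ i / (Nat.factorial i : ℝ)
      + (i : ℝ) * c i (j + 1) k * x ^ i / (Nat.factorial i : ℝ))
      = fun i : ℕ => c i j k * x ^ i / (Nat.factorial i : ℝ)
        - k * (c i (j + 1) k * x ^ i / (Nat.factorial i : ℝ)) := by
    funext i
    rw [c_succ_succ]
    field_simp
    ring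
  rw [heq] at h1
  have := h1.unique h2
  linarith [this]

lemma msnF_at_zero (j : ℕ) (k : ℝ) : msnF j k 0 = if j = 0 then 1 else 0 := by
  rw [msnF, tsum_eq_single 0]
  · simp [c_zero_left]
  · intro i hi
    rw [zero_pow hi]
    simp

lemma eq_at_of_deriv_zero {g : ℝ → ℝ} (hg : ∀ y ∈ Set.Ioo (-1 : ℝ) 1, HasDerivAt g 0 y)
    {x : ℝ} (hx : |x| < 1) : g x = g 0 := by
  rw [abs_lt] at hx
  have hs : Convex ℝ (Set.Ioo (-1 : ℝ) 1) := convex_Ioo _ _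
  apply hs.is_const_of_fderivWithin_eq_zero (𝕜 := ℝ) (f := g)
  · intro y hy
    exact ((hg y hy).differentiableAt).differentiableWithinAt
  · intro y hy
    rw [fderivWithin_of_isOpen isOpen_Ioo hy, (hg y hy).hasFDerivAt.fderiv]
    ext z
    simp
  · exact ⟨hx.1, hx.2⟩
  · constructor <;> norm_num

lemma msnF_eq (k : ℝ) : ∀ (j : ℕ) {x : ℝ}, |x| < 1 →
    msnF j k x = (1 + x) ^ (-k) * Real.log (1 + x) ^ j / (Nat.factorial j : ℝ) := by
  intro j
  induction j with
  | zero =>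
    intro x hx
    have h1x : (0 : ℝ) < 1 + x := by rw [abs_lt] at hx; linarith [hx.1]
    have hder : ∀ y ∈ Set.Ioo (-1 : ℝ) 1,
        HasDerivAt (fun z => msnF 0 k z * (1 + z) ^ k) 0 y := by
      intro y hy
      have hy' : |y| < 1 := abs_lt.2 ⟨hy.1, hy.2⟩
      have h1y : (0 : ℝ) < 1 + y := by linarith [hy.1]
      have hA : HasDerivAt (msnF 0 k) (msnF' 0 k y) y := hasDerivAt_msnF 0 k hy'
      have hB : HasDerivAt (fun z : ℝ => (1 + z) ^ k) (1 * k * (1 + y) ^ (k - 1)) y :=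
        ((hasDerivAt_id y).const_add 1).rpow_const (Or.inl h1y.ne')
      have hg := hA.mul hB
      have hode := msn_ode_zero k hy'
      have huk : (1 + y) ^ k = (1 + y) ^ (k - 1) * (1 + y) := by
        rw [Real.rpow_sub_one h1y.ne']
        field_simp
      have hzero : msnF' 0 k y * (1 + y) ^ k + msnF 0 k y * (1 * k * (1 + y) ^ (k - 1)) = 0 := by
        rw [huk]
        linear_combination (1 + y) ^ (k - 1) * hode
      rw [hzero] at hg
      exact hg
    have hgx := eq_at_of_deriv_zero hder hx
    have h0 : msnF 0 k 0 * (1 + 0 : ℝ) ^ k = 1 := by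
      rw [msnF_at_zero]
      norm_num
    rw [h0] at hgx
    have hbpos : (0 : ℝ) < (1 + x) ^ k := Real.rpow_pos_of_pos h1x k
    rw [Real.rpow_neg h1x.le]
    simp only [pow_zero, Nat.factorial_zero, Nat.cast_one, div_one, mul_one]
    field_simp
    linarith [hgx]
  | succ j ih =>
    intro x hx
    have h1x : (0 : ℝ) < 1 + x := by rw [abs_lt] at hx; linarith [hx.1]
    have hder : ∀ y ∈ Set.Ioo (-1 : ℝ) 1,
        HasDerivAt (fun z => msnF (j + 1) k z * (1 + z) ^ k
          - Real.log (1 + z) ^ (j + 1) / ((j + 1).factorial : ℝ)) 0 y := by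
      intro y hy
      have hy' : |y| < 1 := abs_lt.2 ⟨hy.1, hy.2⟩
      have h1y : (0 : ℝ) < 1 + y := by linarith [hy.1]
      have hA : HasDerivAt (msnF (j + 1) k) (msnF' (j + 1) k y) y := hasDerivAt_msnF (j + 1) k hy'
      have hB : HasDerivAt (fun z : ℝ => (1 + z) ^ k) (1 * k * (1 + y) ^ (k - 1)) y :=
        ((hasDerivAt_id y).const_add 1).rpow_const (Or.inl h1y.ne')
      have hC : HasDerivAt (fun z : ℝ => Real.log (1 + z)) (1 / (1 + y)) y :=
        ((hasDerivAt_id y).const_add 1).log h1y.ne'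
      have hD := hC.pow (j + 1)
      have hg := (hA.mul hB).sub (hD.div_const ((j + 1).factorial : ℝ))
      have hode := msn_ode_succ j k hy'
      rw [ih hy'] at hode
      have huk : (1 + y) ^ k = (1 + y) ^ (k - 1) * (1 + y) := by
        rw [Real.rpow_sub_one h1y.ne']
        field_simp
      have hCA : (1 + y) ^ (-k) * (1 + y) ^ (k - 1) = (1 + y)⁻¹ := by
        rw [← Real.rpow_add h1y, ← Real.rpow_neg_one (1 + y)]
        congr 1
        ring
      have hfac : (((j + 1).factorial : ℕ) : ℝ) = ((j : ℝ) + 1) * (Nat.factorial j : ℝ) := by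
        rw [Nat.factorial_succ]; push_cast; ring
      have hj1 : ((j : ℝ) + 1) ≠ 0 := by positivity
      have hfj : (Nat.factorial j : ℝ) ≠ 0 := by positivity
      have e1 : msnF' (j + 1) k y * (1 + y) ^ k
          = ((1 + y) ^ (-k) * Real.log (1 + y) ^ j / (Nat.factorial j : ℝ)
            - k * msnF (j + 1) k y) * (1 + y) ^ (k - 1) := by
        rw [huk]
        linear_combination (1 + y) ^ (k - 1) * hode
      have e2 : ((1 + y) ^ (-k) * Real.log (1 + y) ^ j / (Nat.factorial j : ℝ))
            * (1 + y) ^ (k - 1)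
          = Real.log (1 + y) ^ j * (1 / (1 + y)) / (Nat.factorial j : ℝ) := by
        linear_combination (Real.log (1 + y) ^ j / (Nat.factorial j : ℝ)) * hCA
      have e3 : (((j : ℝ) + 1) * Real.log (1 + y) ^ j * (1 / (1 + y)))
            / (((j + 1).factorial : ℕ) : ℝ)
          = Real.log (1 + y) ^ j * (1 / (1 + y)) / (Nat.factorial j : ℝ) := by
        rw [hfac]
        field_simp
      have hzero : msnF' (j + 1) k y * (1 + y) ^ k
          + msnF (j + 1) k y * (1 * k * (1 + y) ^ (k - 1))
          - ((((j + 1) : ℕ) : ℝ) * Real.log (1 + y) ^ (j + 1 - 1) * (1 / (1 + y)))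
            / (((j + 1).factorial : ℕ) : ℝ) = 0 := by
        simp only [Nat.add_sub_cancel]
        push_cast
        push_cast at e3
        linear_combination e1 + e2 - e3
      rw [hzero] at hg
      exact hg
    have hgx := eq_at_of_deriv_zero hder hx
    have hg0 : msnF (j + 1) k 0 * (1 + 0 : ℝ) ^ k
        - Real.log (1 + 0) ^ (j + 1) / ((j + 1).factorial : ℝ) = 0 := by
      rw [msnF_at_zero]
      norm_num
    rw [hg0] at hgx
    have hE : msnF (j + 1) k x * (1 + x) ^ k
        = Real.log (1 + x) ^ (j + 1) / ((j + 1).factorial : ℝ) := by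
      linarith [hgx]
    have hbpos : (0 : ℝ) < (1 + x) ^ k := Real.rpow_pos_of_pos h1x k
    rw [Real.rpow_neg h1x.le]
    rw [eq_div_iff (by positivity : ((j + 1).factorial : ℝ) ≠ 0)] at hE ⊢
    field_simp at hE ⊢
    linarith [hE]

/-- Exponential generating function of the MSN1 numbers: for `|x| < 1`,
`sum_{i=0}^{∞} c(i,j,k)*x^i/i! = (1+x)^(-k) * (ln(1+x))^j / j!`,
where `(1+x)^(-k)` is the real power. -/
theorem msn1_egf (j : ℕ) (k x : ℝ) (hx : |x| < 1) :
    HasSum (fun i : ℕ => c i j k * x ^ i / (Nat.factorial i : ℝ))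
      ((1 + x) ^ (-k) * (Real.log (1 + x)) ^ j / (Nat.factorial j : ℝ)) := by
  have h := hasSum_msnF j k hx
  rwa [msnF_eq k j hx] at h
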